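/- For every positive integer n, the average of the down degree over all permutations in S_n equals (n+1)·H_n − 2n, where H_n = Σ_{i=1}^n 1/i. -/

import Mathlib

open Equiv Finset

/-- Number of inversions (Coxeter length) of a permutation of `Fin n`. -/
def invNum {n : ℕ} (π : Equiv.Perm (Fin n)) : ℕ :=
  (Finset.univ.filter (fun p : Fin n × Fin n => p.1 < p.2 ∧ π p.2 < π p.1)).card

/-- Down degree: number of transpositions `t_{a,b}` with `ℓ(t_{a,b} π) = ℓ(π) - 1`. -/
def downDeg {n : ℕ} (π : Equiv.Perm (Fin n)) : ℕ :=
  (Finset.univ.filter (fun p : Fin n × Fin n =>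
    p.1 < p.2 ∧ invNum (Equiv.swap p.1 p.2 * π) + 1 = invNum π)).card

/-- Total degree: number of transpositions `t_{a,b}` with `ℓ(t_{a,b} π) = ℓ(π) ± 1`. -/
def totalDeg {n : ℕ} (π : Equiv.Perm (Fin n)) : ℕ :=
  (Finset.univ.filter (fun p : Fin n × Fin n =>
    p.1 < p.2 ∧ (invNum (Equiv.swap p.1 p.2 * π) + 1 = invNum π ∨
      invNum (Equiv.swap p.1 p.2 * π) = invNum π + 1))).card


theorem Equiv.Perm.apply_inv_self {α : Type*} (f : Perm α) (x : α) : f (f⁻¹ x) = x :=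
  f.apply_symm_apply x

theorem Equiv.Perm.inv_apply_self {α : Type*} (f : Perm α) (x : α) : f⁻¹ (f x) = x :=
  f.symm_apply_apply x

private lemma keyZ (i j k a b c : ℕ) (hij : j < i) (hab : a < b) (hk1 : k ≠ i) (hk2 : k ≠ j)
    (hc1 : c ≠ a) (hc2 : c ≠ b) :
    ((if k < i ∧ a < c then (1:ℤ) else 0) - (if k < i ∧ b < c then 1 else 0))
    + ((if i < k ∧ c < a then (1:ℤ) else 0) - (if i < k ∧ c < b then 1 else 0))
    + ((if k < j ∧ b < c then (1:ℤ) else 0) - (if k < j ∧ a < c then 1 else 0))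
    + ((if j < k ∧ c < b then (1:ℤ) else 0) - (if j < k ∧ c < a then 1 else 0))
    = 2 * (if j < k ∧ k < i ∧ a < c ∧ c < b then 1 else 0) := by
  split_ifs <;> omega

private lemma split2 {n : ℕ} {M : Type*} [AddCommGroup M] (f : Fin n → M) (i j : Fin n)
    (hij : i ≠ j) :
    ∑ x, f x = f i + f j + ∑ x ∈ (univ.erase j).erase i, f x := by
  rw [← Finset.sum_erase_add univ f (mem_univ j),
    ← Finset.sum_erase_add (univ.erase j) f (Finset.mem_erase.mpr ⟨hij, mem_univ i⟩)]
  abel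

lemma invNum_sum {n : ℕ} (π : Perm (Fin n)) :
    (invNum π : ℤ) = ∑ p : Fin n × Fin n, (if p.1 < p.2 ∧ π p.2 < π p.1 then 1 else 0) := by
  rw [invNum, Finset.card_filter]
  push_cast
  rfl

lemma A1 {n : ℕ} (π : Perm (Fin n)) (a b : Fin n) (hab : a < b) (hji : π⁻¹ b < π⁻¹ a) :
    (invNum π : ℤ) = invNum (Equiv.swap a b * π) + 1 +
      2 * ∑ k : Fin n, (if π⁻¹ b < k ∧ k < π⁻¹ a ∧ a < π k ∧ π k < b then (1:ℤ) else 0) := by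
  set τ := Equiv.swap a b * π with hτdef
  set i := π⁻¹ a with hi
  set j := π⁻¹ b with hj
  have hπi : π i = a := π.apply_inv_self a
  have hπj : π j = b := π.apply_inv_self b
  have hij : i ≠ j := by
    intro h
    rw [h, hπj] at hπi
    exact absurd hπi (ne_of_gt hab)
  have hτapp : ∀ x, τ x = Equiv.swap a b (π x) := fun x => rfl
  have hτi : τ i = b := by rw [hτapp, hπi, swap_apply_left]
  have hτj : τ j = a := by rw [hτapp, hπj, swap_apply_right]
  have hne : ∀ x : Fin n, x ≠ i → x ≠ j → π x ≠ a ∧ π x ≠ b := by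
    intro x hxi hxj
    constructor
    · intro h; exact hxi (by rw [hi, ← h, π.inv_apply_self])
    · intro h; exact hxj (by rw [hj, ← h, π.inv_apply_self])
  have hτeq : ∀ x : Fin n, x ≠ i → x ≠ j → τ x = π x := by
    intro x hxi hxj
    rw [hτapp]
    exact swap_apply_of_ne_of_ne (hne x hxi hxj).1 (hne x hxi hxj).2
  -- difference function
  set D : Fin n → Fin n → ℤ := fun x y =>
    (if x < y ∧ π y < π x then (1:ℤ) else 0) - (if x < y ∧ τ y < τ x then (1:ℤ) else 0)
    with hD
  have hD0 : ∀ x y : Fin n, x ≠ i → x ≠ j → y ≠ i → y ≠ j → D x y = 0 := by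
    intro x y hxi hxj hyi hyj
    simp only [hD, hτeq x hxi hxj, hτeq y hyi hyj, sub_self]
  set E : Finset (Fin n) := (univ.erase j).erase i with hE
  have hmemE : ∀ k : Fin n, k ∈ E → k ≠ i ∧ k ≠ j := by
    intro k hk
    rw [hE, Finset.mem_erase, Finset.mem_erase] at hk
    exact ⟨hk.1, hk.2.1⟩
  have hperk : ∀ k : Fin n, k ∈ E →
      D k i + D i k + D k j + D j k
        = 2 * (if j < k ∧ k < i ∧ a < π k ∧ π k < b then (1:ℤ) else 0) := by
    intro k hk
    obtain ⟨hki, hkj⟩ := hmemE k hk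
    obtain ⟨hca, hcb⟩ := hne k hki hkj
    have hτk : τ k = π k := hτeq k hki hkj
    simp only [hD, hπi, hπj, hτi, hτj, hτk, Fin.lt_def]
    exact keyZ i.val j.val k.val a.val b.val (π k).val (Fin.lt_def.mp hji) (Fin.lt_def.mp hab)
      (fun h => hki (Fin.val_injective h)) (fun h => hkj (Fin.val_injective h))
      (fun h => hca (Fin.val_injective h)) (fun h => hcb (Fin.val_injective h))
  have hsum : ∑ x : Fin n, ∑ y : Fin n, D x y
      = 1 + 2 * ∑ k : Fin n, (if j < k ∧ k < i ∧ a < π k ∧ π k < b then (1:ℤ) else 0) := by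
    rw [split2 (fun x => ∑ y, D x y) i j hij]
    rw [split2 (fun y => D i y) i j hij, split2 (fun y => D j y) i j hij]
    have e1 : D i i = 0 := by simp [hD]
    have e2 : D j j = 0 := by simp [hD]
    have e3 : D i j = 0 := by
      have : ¬ (i < j) := not_lt.mpr (le_of_lt hji)
      simp [hD, this]
    have e4 : D j i = 1 := by
      have h1 : (j < i ∧ π i < π j) := ⟨hji, by rw [hπi, hπj]; exact hab⟩
      have h2 : ¬ (j < i ∧ τ i < τ j) := by
        rw [hτi, hτj]
        exact fun h => absurd h.2 (not_lt.mpr (le_of_lt hab))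
      simp only [hD]
      rw [if_pos h1, if_neg h2]
      norm_num
    rw [e1, e2, e3, e4]
    have hEsum : ∑ x ∈ E, (∑ y, D x y) = ∑ x ∈ E, (D x i + D x j) := by
      apply Finset.sum_congr rfl
      intro x hx
      obtain ⟨hxi, hxj⟩ := hmemE x hx
      rw [split2 (fun y => D x y) i j hij]
      have : ∑ y ∈ E, D x y = 0 :=
        Finset.sum_eq_zero fun y hy => hD0 x y hxi hxj (hmemE y hy).1 (hmemE y hy).2
      rw [this]; ring
    rw [hEsum]
    have hcomb : (∑ y ∈ E, D i y) + (∑ y ∈ E, D j y) + ∑ x ∈ E, (D x i + D x j)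
        = ∑ k ∈ E, (D k i + D i k + D k j + D j k) := by
      rw [← Finset.sum_add_distrib, ← Finset.sum_add_distrib]
      exact Finset.sum_congr rfl fun k _ => by ring
    have hfin : ∑ k ∈ E, (D k i + D i k + D k j + D j k)
        = 2 * ∑ k : Fin n, (if j < k ∧ k < i ∧ a < π k ∧ π k < b then (1:ℤ) else 0) := by
      rw [Finset.sum_congr rfl hperk, ← Finset.mul_sum]
      congr 1
      apply Finset.sum_subset (Finset.subset_univ E)
      intro x _ hx
      have hxij : x = i ∨ x = j := by
        by_contra hc
        push_neg at hc
        exact hx (Finset.mem_erase.mpr ⟨hc.1, Finset.mem_erase.mpr ⟨hc.2, mem_univ x⟩⟩)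
      rcases hxij with h | h <;> subst h <;> simp
    -- combine
    calc (0 + 0 + ∑ y ∈ E, D i y) + (1 + 0 + ∑ y ∈ E, D j y) + ∑ x ∈ E, (D x i + D x j)
        = 1 + ((∑ y ∈ E, D i y) + (∑ y ∈ E, D j y) + ∑ x ∈ E, (D x i + D x j)) := by ring
      _ = 1 + ∑ k ∈ E, (D k i + D i k + D k j + D j k) := by rw [hcomb]
      _ = _ := by rw [hfin]
  have expand : (invNum π : ℤ) - (invNum τ : ℤ) = ∑ x : Fin n, ∑ y : Fin n, D x y := by
    rw [invNum_sum π, invNum_sum τ, Fintype.sum_prod_type, Fintype.sum_prod_type,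
      ← Finset.sum_sub_distrib]
    exact Finset.sum_congr rfl fun x _ => by rw [← Finset.sum_sub_distrib]
  have := expand.trans hsum
  linarith
lemma cover_iff {n : ℕ} (π : Perm (Fin n)) (a b : Fin n) (hab : a < b) :
    invNum (Equiv.swap a b * π) + 1 = invNum π ↔
      (π⁻¹ b < π⁻¹ a ∧ ∀ k, π⁻¹ b < k → k < π⁻¹ a → ¬(a < π k ∧ π k < b)) := by
  have hnonneg : ∀ (σ : Perm (Fin n)),
      0 ≤ ∑ k : Fin n, (if σ⁻¹ b < k ∧ k < σ⁻¹ a ∧ a < σ k ∧ σ k < b then (1:ℤ) else 0) :=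
    fun σ => Finset.sum_nonneg fun k _ => by positivity
  constructor
  · intro h
    have hne : π⁻¹ a ≠ π⁻¹ b := fun hc => (ne_of_lt hab) (by
      have := congrArg π hc
      rwa [π.apply_inv_self, π.apply_inv_self] at this)
    rcases lt_or_gt_of_ne hne with hlt | hgt
    · -- π⁻¹ a < π⁻¹ b : contradiction
      exfalso
      set τ := Equiv.swap a b * π with hτ
      have h1 : τ⁻¹ b = π⁻¹ a := by
        rw [hτ, mul_inv_rev, Perm.mul_apply, swap_inv, swap_apply_right]
      have h2 : τ⁻¹ a = π⁻¹ b := by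
        rw [hτ, mul_inv_rev, Perm.mul_apply, swap_inv, swap_apply_left]
      have hA := A1 τ a b hab (by rw [h1, h2]; exact hlt)
      have hππ : Equiv.swap a b * τ = π := by
        rw [hτ, ← mul_assoc, swap_mul_self, one_mul]
      rw [hππ] at hA
      have := hnonneg τ
      omega
    · refine ⟨hgt, fun k hk1 hk2 => ?_⟩
      have hA := A1 π a b hab hgt
      rw [← h] at hA
      have hzero : ∑ k : Fin n,
          (if π⁻¹ b < k ∧ k < π⁻¹ a ∧ a < π k ∧ π k < b then (1:ℤ) else 0) = 0 := by
        have := hnonneg π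
        omega
      intro hc
      have hterm := (Finset.sum_eq_zero_iff_of_nonneg (fun k _ => by positivity)).mp hzero
        k (mem_univ k)
      rw [if_pos ⟨hk1, hk2, hc.1, hc.2⟩] at hterm
      exact one_ne_zero hterm
  · rintro ⟨hgt, hnok⟩
    have hA := A1 π a b hab hgt
    have hzero : ∑ k : Fin n,
        (if π⁻¹ b < k ∧ k < π⁻¹ a ∧ a < π k ∧ π k < b then (1:ℤ) else 0) = 0 :=
      Finset.sum_eq_zero fun k _ => by
        rw [if_neg]
        rintro ⟨h1, h2, h3, h4⟩
        exact hnok k h1 h2 ⟨h3, h4⟩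
    rw [hzero] at hA
    omega

variable {n : ℕ}

def IsGood (a b : Fin n) (σ : Perm (Fin n)) : Prop :=
  σ b < σ a ∧ ∀ c, a < c → c < b → ¬(σ b < σ c ∧ σ c < σ a)

def IsBad (a b : Fin n) (σ : Perm (Fin n)) : Prop :=
  ∀ c, a ≤ c → c ≤ b → c ≠ b → σ c < σ b

instance (a b : Fin n) : DecidablePred (IsGood a b) := fun σ => by
  unfold IsGood; infer_instance

instance (a b : Fin n) : DecidablePred (IsBad a b) := fun σ => by
  unfold IsBad; infer_instance

private lemma swap_mem_Icc {a b u v c : Fin n} (hu : u ∈ Finset.Icc a b)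
    (hv : v ∈ Finset.Icc a b) (hc : c ∈ Finset.Icc a b) :
    Equiv.swap u v c ∈ Finset.Icc a b := by
  rcases eq_or_ne c u with rfl | hcu
  · rwa [swap_apply_left]
  rcases eq_or_ne c v with rfl | hcv
  · rwa [swap_apply_right]
  · rwa [swap_apply_of_ne_of_ne hcu hcv]

private lemma swap_image_Icc {a b u v : Fin n} (hu : u ∈ Finset.Icc a b)
    (hv : v ∈ Finset.Icc a b) :
    (Finset.Icc a b).image (Equiv.swap u v) = Finset.Icc a b := by
  apply Finset.Subset.antisymm
  · intro y hy
    rw [Finset.mem_image] at hy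
    obtain ⟨x, hx, rfl⟩ := hy
    exact swap_mem_Icc hu hv hx
  · intro y hy
    rw [Finset.mem_image]
    exact ⟨Equiv.swap u v y, swap_mem_Icc hu hv hy, Equiv.swap_apply_self u v y⟩

private lemma image_mul_swap {a b u v : Fin n} (τ : Perm (Fin n))
    (hu : u ∈ Finset.Icc a b) (hv : v ∈ Finset.Icc a b) :
    (Finset.Icc a b).image ⇑(τ * Equiv.swap u v) = (Finset.Icc a b).image ⇑τ := by
  rw [Perm.coe_mul, ← Finset.image_image, swap_image_Icc hu hv]

private lemma good_helper {a b : Fin n} {σ : Perm (Fin n)} (h : IsGood a b σ) :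
    ∀ c, a ≤ c → c ≤ b → σ b < σ c → σ a ≤ σ c := by
  intro c hac hcb hbc
  rcases eq_or_ne c a with rfl | hca
  · exact le_refl _
  rcases eq_or_ne c b with rfl | hcb'
  · exact absurd hbc (lt_irrefl _)
  have h2 := h.2 c (lt_of_le_of_ne hac (Ne.symm hca)) (lt_of_le_of_ne hcb hcb')
  by_contra hlt
  exact h2 ⟨hbc, lt_of_not_ge hlt⟩

lemma bad_card (a b : Fin n) (hab : a ≤ b) :
    ((Finset.Icc a b) ×ˢ (univ.filter (fun σ => IsBad a b σ))).card
      = Fintype.card (Perm (Fin n)) := by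
  have hane : (Finset.Icc a b).Nonempty := Finset.nonempty_Icc.mpr hab
  have hbmem : b ∈ Finset.Icc a b := Finset.mem_Icc.mpr ⟨hab, le_refl b⟩
  rw [← Finset.card_univ]
  apply Finset.card_bij' (i := fun p _ => p.2 * Equiv.swap b p.1)
    (j := fun σ _ =>
      (σ.symm (((Finset.Icc a b).image σ).max' (hane.image σ)),
       σ * Equiv.swap b (σ.symm (((Finset.Icc a b).image σ).max' (hane.image σ)))))
  · -- hi : lands in univ
    intro p hp
    exact mem_univ _
  · -- hj : lands in s
    intro σ _
    set M := ((Finset.Icc a b).image σ).max' (hane.image σ) with hM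
    have hMmem : M ∈ (Finset.Icc a b).image σ := Finset.max'_mem _ _
    rw [Finset.mem_image] at hMmem
    obtain ⟨c₀, hc₀, hσc₀⟩ := hMmem
    have hamax : σ.symm M = c₀ := by rw [← hσc₀, Equiv.symm_apply_apply]
    rw [Finset.mem_product]
    constructor
    · rw [hamax]; exact hc₀
    · rw [Finset.mem_filter]
      refine ⟨mem_univ _, ?_⟩
      intro c hac hcb hcb'
      rw [hamax]
      have h1 : (σ * Equiv.swap b c₀) c = σ (Equiv.swap b c₀ c) := rfl
      have h2 : (σ * Equiv.swap b c₀) b = σ c₀ := by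
        rw [Perm.mul_apply, swap_apply_left]
      rw [h1, h2, hσc₀]
      have hmem : Equiv.swap b c₀ c ∈ Finset.Icc a b :=
        swap_mem_Icc hbmem hc₀ (Finset.mem_Icc.mpr ⟨hac, hcb⟩)
      have hle : σ (Equiv.swap b c₀ c) ≤ M :=
        Finset.le_max' _ _ (Finset.mem_image_of_mem σ hmem)
      rcases lt_or_eq_of_le hle with h | h
      · exact h
      · exfalso
        have : Equiv.swap b c₀ c = c₀ := σ.injective (by rw [h, hσc₀])
        have : c = b := by
          have := congrArg (Equiv.swap b c₀) this
          rwa [Equiv.swap_apply_self, swap_apply_right] at this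
        exact hcb' this
  · -- left inverse : j (i p) = p
    rintro ⟨c, τ⟩ hp
    rw [Finset.mem_product, Finset.mem_filter] at hp
    obtain ⟨hc, _, hτ⟩ := hp
    set σ := τ * Equiv.swap b c with hσ
    have himg : (Finset.Icc a b).image ⇑σ = (Finset.Icc a b).image ⇑τ :=
      image_mul_swap τ hbmem hc
    have hmax : ((Finset.Icc a b).image ⇑σ).max' (hane.image σ) = τ b := by
      apply le_antisymm
      · apply Finset.max'_le
        intro x hx
        rw [himg, Finset.mem_image] at hx
        obtain ⟨c', hc', rfl⟩ := hx
        rcases eq_or_ne c' b with rfl | hne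
        · exact le_refl _
        · exact le_of_lt (hτ c' (Finset.mem_Icc.mp hc').1 (Finset.mem_Icc.mp hc').2 hne)
      · apply Finset.le_max'
        rw [himg]
        exact Finset.mem_image_of_mem τ hbmem
    have hsymm : σ.symm (τ b) = c := by
      apply σ.injective
      rw [Equiv.apply_symm_apply, hσ, Perm.mul_apply, swap_apply_right]
    have e1 : σ.symm (((Finset.Icc a b).image ⇑σ).max' (hane.image σ)) = c := by
      rw [hmax, hsymm]
    refine Prod.ext ?_ ?_
    · exact e1
    · show σ * Equiv.swap b _ = τ
      rw [e1, hσ, mul_assoc, swap_mul_self, mul_one]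
  · -- right inverse : i (j σ) = σ
    intro σ _
    show σ * Equiv.swap b _ * Equiv.swap b _ = σ
    rw [mul_assoc, swap_mul_self, mul_one]

private lemma T_nonempty {a b : Fin n} (hab : a ≤ b) {σ : Perm (Fin n)}
    (h : ¬ IsBad a b σ) :
    ((Finset.Icc a b).filter (fun c => σ b < σ c)).Nonempty := by
  unfold IsBad at h
  push_neg at h
  obtain ⟨c, hac, hcb, hcb', hge⟩ := h
  refine ⟨c, Finset.mem_filter.mpr ⟨Finset.mem_Icc.mpr ⟨hac, hcb⟩, ?_⟩⟩
  rcases lt_or_eq_of_le hge with h | h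
  · exact h
  · exact absurd (σ.injective h.symm) hcb'

lemma good_card_aux (a b : Fin n) (hab : a < b) :
    (((Finset.Icc a b).erase b) ×ˢ (univ.filter (fun σ => IsGood a b σ))).card
      = (univ.filter (fun σ : Perm (Fin n) => ¬ IsBad a b σ)).card := by
  have hab' : a ≤ b := le_of_lt hab
  have hamem : a ∈ Finset.Icc a b := Finset.mem_Icc.mpr ⟨le_refl a, hab'⟩
  have hbmem : b ∈ Finset.Icc a b := Finset.mem_Icc.mpr ⟨hab', le_refl b⟩
  have hTne : ∀ σ ∈ univ.filter (fun σ : Perm (Fin n) => ¬ IsBad a b σ),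
      ((Finset.Icc a b).filter (fun c => σ b < σ c)).Nonempty := by
    intro σ hσ
    exact T_nonempty hab' (Finset.mem_filter.mp hσ).2
  refine Finset.card_bij' (fun p _ => p.2 * Equiv.swap a p.1)
    (fun σ hσ =>
      (σ.symm (((((Finset.Icc a b).filter (fun c => σ b < σ c))).image σ).min'
        ((hTne σ hσ).image σ)),
       σ * Equiv.swap a (σ.symm (((((Finset.Icc a b).filter (fun c => σ b < σ c))).image σ).min'
        ((hTne σ hσ).image σ))))) ?hi ?hj ?left ?right
  case hi =>
    -- i lands in t : ¬ IsBad (τ * swap a c)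
    rintro ⟨c, τ⟩ hp
    rw [Finset.mem_product, Finset.mem_filter] at hp
    obtain ⟨hc, _, hτ⟩ := hp
    have hcb : c ≠ b := (Finset.mem_erase.mp hc).1
    have hcIcc : c ∈ Finset.Icc a b := (Finset.mem_erase.mp hc).2
    rw [Finset.mem_filter]
    refine ⟨mem_univ _, ?_⟩
    intro hbad
    have h1 : (τ * Equiv.swap a c) c = τ a := by rw [Perm.mul_apply, swap_apply_right]
    have h2 : (τ * Equiv.swap a c) b = τ b := by
      rw [Perm.mul_apply, swap_apply_of_ne_of_ne (Ne.symm (ne_of_lt hab)) (Ne.symm hcb)]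
    have := hbad c (Finset.mem_Icc.mp hcIcc).1 (Finset.mem_Icc.mp hcIcc).2 hcb
    rw [h1, h2] at this
    exact absurd hτ.1 (not_lt.mpr (le_of_lt this))
  case hj =>
    -- j lands in s
    intro σ hσ
    beta_reduce
    set T := (Finset.Icc a b).filter (fun c => σ b < σ c) with hT
    set M := (T.image σ).min' ((hTne σ hσ).image σ) with hM
    have hMmem : M ∈ T.image σ := Finset.min'_mem _ _
    rw [Finset.mem_image] at hMmem
    obtain ⟨c₀, hc₀, hσc₀⟩ := hMmem
    have hamin : σ.symm M = c₀ := by rw [← hσc₀, Equiv.symm_apply_apply]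
    have hc₀Icc : c₀ ∈ Finset.Icc a b := (Finset.mem_filter.mp hc₀).1
    have hc₀gt : σ b < σ c₀ := (Finset.mem_filter.mp hc₀).2
    have hc₀b : c₀ ≠ b := fun h => absurd hc₀gt (by rw [h]; exact lt_irrefl _)
    rw [Finset.mem_product]
    constructor
    · rw [hamin]
      exact Finset.mem_erase.mpr ⟨hc₀b, hc₀Icc⟩
    · rw [Finset.mem_filter]
      refine ⟨mem_univ _, ?_, ?_⟩
      · -- σ' b < σ' a
        rw [hamin]
        have e1 : (σ * Equiv.swap a c₀) b = σ b := by
          rw [Perm.mul_apply, swap_apply_of_ne_of_ne (Ne.symm (ne_of_lt hab)) (Ne.symm hc₀b)]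
        have e2 : (σ * Equiv.swap a c₀) a = σ c₀ := by rw [Perm.mul_apply, swap_apply_left]
        rw [e1, e2]
        exact hc₀gt
      · -- no middle
        rw [hamin]
        intro c hac hcb ⟨hlo, hhi⟩
        have e1 : (σ * Equiv.swap a c₀) b = σ b := by
          rw [Perm.mul_apply, swap_apply_of_ne_of_ne (Ne.symm (ne_of_lt hab)) (Ne.symm hc₀b)]
        have e2 : (σ * Equiv.swap a c₀) a = σ c₀ := by rw [Perm.mul_apply, swap_apply_left]
        have e3 : (σ * Equiv.swap a c₀) c = σ (Equiv.swap a c₀ c) := rfl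
        rw [e1, e3] at hlo
        rw [e2, e3] at hhi
        have hmem : Equiv.swap a c₀ c ∈ Finset.Icc a b :=
          swap_mem_Icc hamem hc₀Icc (Finset.mem_Icc.mpr ⟨le_of_lt hac, le_of_lt hcb⟩)
        have hmemT : Equiv.swap a c₀ c ∈ T := Finset.mem_filter.mpr ⟨hmem, hlo⟩
        have : M ≤ σ (Equiv.swap a c₀ c) :=
          Finset.min'_le _ _ (Finset.mem_image_of_mem σ hmemT)
        rw [← hσc₀] at this
        exact absurd hhi (not_lt.mpr this)
  case left =>
    -- left inverse
    rintro ⟨c, τ⟩ hp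
    rw [Finset.mem_product, Finset.mem_filter] at hp
    obtain ⟨hc, _, hτ⟩ := hp
    have hcb : c ≠ b := (Finset.mem_erase.mp hc).1
    have hcIcc : c ∈ Finset.Icc a b := (Finset.mem_erase.mp hc).2
    set σ := τ * Equiv.swap a c with hσdef
    have hσb : σ b = τ b := by
      rw [hσdef, Perm.mul_apply, swap_apply_of_ne_of_ne (Ne.symm (ne_of_lt hab)) (Ne.symm hcb)]
    have hσc : σ c = τ a := by rw [hσdef, Perm.mul_apply, swap_apply_right]
    have hcT : c ∈ (Finset.Icc a b).filter (fun c' => σ b < σ c') := by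
      rw [Finset.mem_filter, hσb, hσc]
      exact ⟨hcIcc, hτ.1⟩
    have hmin : (((Finset.Icc a b).filter (fun c' => σ b < σ c')).image σ).min'
        (Finset.Nonempty.image ⟨c, hcT⟩ σ) = τ a := by
      apply le_antisymm
      · apply Finset.min'_le
        rw [← hσc]
        exact Finset.mem_image_of_mem σ hcT
      · apply Finset.le_min'
        intro x hx
        rw [Finset.mem_image] at hx
        obtain ⟨c', hc', rfl⟩ := hx
        rw [Finset.mem_filter] at hc'
        obtain ⟨hc'Icc, hc'gt⟩ := hc'
        have e : σ c' = τ (Equiv.swap a c c') := by rw [hσdef]; rfl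
        have hmem : Equiv.swap a c c' ∈ Finset.Icc a b := swap_mem_Icc hamem hcIcc hc'Icc
        rw [e]
        rw [e, hσb] at hc'gt
        exact good_helper hτ _ (Finset.mem_Icc.mp hmem).1 (Finset.mem_Icc.mp hmem).2 hc'gt
    have hsymm : σ.symm (τ a) = c := by
      apply σ.injective
      rw [Equiv.apply_symm_apply, hσc]
    refine Prod.ext ?_ ?_
    · show σ.symm _ = c
      rw [hmin, hsymm]
    · show σ * Equiv.swap a (σ.symm _) = τ
      rw [hmin, hsymm, hσdef, mul_assoc, swap_mul_self, mul_one]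
  case right =>
    -- right inverse
    intro σ _
    show σ * Equiv.swap a _ * Equiv.swap a _ = σ
    rw [mul_assoc, swap_mul_self, mul_one]

lemma good_count (a b : Fin n) (hab : a < b) :
    (b.val - a.val + 1) * (univ.filter (fun σ : Perm (Fin n) => IsGood a b σ)).card
      = n.factorial := by
  set G := (univ.filter (fun σ : Perm (Fin n) => IsGood a b σ)).card with hG
  set B := (univ.filter (fun σ : Perm (Fin n) => IsBad a b σ)).card with hB
  have hm : (Finset.Icc a b).card = b.val + 1 - a.val := Fin.card_Icc a b
  set m := b.val + 1 - a.val with hmdef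
  have hav : a.val < b.val := hab
  have hm2 : 2 ≤ m := by omega
  have h1 : m * B = n.factorial := by
    have h := bad_card a b (le_of_lt hab)
    rw [Finset.card_product, hm, Fintype.card_perm, Fintype.card_fin] at h
    exact h
  have h3 : (univ.filter (fun σ : Perm (Fin n) => ¬ IsBad a b σ)).card
      = n.factorial - B := by
    have h4 := Finset.card_filter_add_card_filter_not
      (s := (univ : Finset (Perm (Fin n)))) (p := fun σ => IsBad a b σ)
    rw [Finset.card_univ, Fintype.card_perm, Fintype.card_fin] at h4
    omega
  have h2 : (m - 1) * G = n.factorial - B := by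
    have h := good_card_aux a b hab
    rw [Finset.card_product,
      Finset.card_erase_of_mem (Finset.mem_Icc.mpr ⟨le_of_lt hab, le_refl b⟩), hm, h3] at h
    exact h
  have hBle : B ≤ n.factorial := by
    calc B ≤ m * B := Nat.le_mul_of_pos_left B (by omega)
      _ = n.factorial := h1
  -- pass to ℤ
  have key : ((m : ℤ) - 1) * (m * G) = ((m : ℤ) - 1) * n.factorial := by
    have h1' : (m : ℤ) * B = n.factorial := by exact_mod_cast h1
    have h2' : ((m : ℤ) - 1) * G = n.factorial - B := by
      have := h2
      have e : ((m - 1 : ℕ) : ℤ) = (m : ℤ) - 1 := by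
        push_cast [Nat.cast_sub (by omega : 1 ≤ m)]; ring
      calc ((m : ℤ) - 1) * G = ((m - 1 : ℕ) : ℤ) * G := by rw [e]
        _ = ((n.factorial - B : ℕ) : ℤ) := by exact_mod_cast congrArg (Nat.cast (R := ℤ)) this
        _ = (n.factorial : ℤ) - B := by rw [Nat.cast_sub hBle]
    calc ((m : ℤ) - 1) * (m * G) = (m : ℤ) * (((m : ℤ) - 1) * G) := by ring
      _ = (m : ℤ) * ((n.factorial : ℤ) - B) := by rw [h2']
      _ = (m : ℤ) * n.factorial - (m : ℤ) * B := by ring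
      _ = (m : ℤ) * n.factorial - n.factorial := by rw [h1']
      _ = ((m : ℤ) - 1) * n.factorial := by ring
  have hcancel : (m : ℤ) * G = n.factorial :=
    mul_left_cancel₀ (by
      have h5 : (2:ℤ) ≤ (m:ℤ) := by exact_mod_cast hm2
      omega) key
  have : m * G = n.factorial := by exact_mod_cast hcancel
  have hme : b.val - a.val + 1 = m := by omega
  rw [hme]
  exact this

private lemma sum_inv_shift (n : ℕ) :
    ∑ j ∈ Finset.range n, (1:ℚ)/((j + 2 : ℕ) : ℚ)
      = (∑ i ∈ Finset.Icc 1 (n+1), (1:ℚ)/(i : ℚ)) - 1 := by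
  induction n with
  | zero => simp
  | succ n ih =>
    rw [Finset.sum_range_succ, ih, Finset.sum_Icc_succ_top (by omega : 1 ≤ n + 1 + 1)]
    push_cast
    ring

private lemma sum_reflect (n : ℕ) :
    ∑ x ∈ Finset.range n, (1:ℚ)/((n - x + 1 : ℕ) : ℚ)
      = ∑ j ∈ Finset.range n, (1:ℚ)/((j + 2 : ℕ) : ℚ) := by
  rw [← Finset.sum_range_reflect (fun x => (1:ℚ)/((n - x + 1 : ℕ) : ℚ)) n]
  apply Finset.sum_congr rfl
  intro j hj
  rw [Finset.mem_range] at hj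
  congr 2
  omega

private lemma harm (n : ℕ) :
    ∑ x ∈ Finset.range n, ∑ y ∈ Finset.range n,
        (if x < y then (1:ℚ)/((y - x + 1 : ℕ) : ℚ) else 0)
      = (n + 1) * (∑ i ∈ Finset.Icc 1 n, (1 : ℚ) / i) - 2 * n := by
  induction n with
  | zero => simp
  | succ n ih =>
    have hsplit : ∑ x ∈ Finset.range (n+1), ∑ y ∈ Finset.range (n+1),
        (if x < y then (1:ℚ)/((y - x + 1 : ℕ) : ℚ) else 0)
        = (∑ x ∈ Finset.range n, ∑ y ∈ Finset.range n,
            (if x < y then (1:ℚ)/((y - x + 1 : ℕ) : ℚ) else 0))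
          + ∑ x ∈ Finset.range n, (1:ℚ)/((n - x + 1 : ℕ) : ℚ) := by
      rw [Finset.sum_range_succ]
      have hlast : ∑ y ∈ Finset.range (n+1),
          (if n < y then (1:ℚ)/((y - n + 1 : ℕ) : ℚ) else 0) = 0 :=
        Finset.sum_eq_zero fun y hy => by
          rw [Finset.mem_range] at hy
          rw [if_neg (by omega)]
      rw [hlast, add_zero]
      rw [← Finset.sum_add_distrib]
      apply Finset.sum_congr rfl
      intro x hx
      rw [Finset.mem_range] at hx
      rw [Finset.sum_range_succ, if_pos hx]
    rw [hsplit, ih, sum_reflect, sum_inv_shift]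
    have hH : ∑ i ∈ Finset.Icc 1 (n+1), (1:ℚ)/(i:ℚ)
        = (∑ i ∈ Finset.Icc 1 n, (1:ℚ)/(i:ℚ)) + 1/((n+1 : ℕ):ℚ) := by
      rw [Finset.sum_Icc_succ_top (by omega : 1 ≤ n + 1)]
    rw [hH]
    have hne : ((n+1 : ℕ) : ℚ) ≠ 0 := by positivity
    push_cast
    push_cast at hne
    field_simp
    ring

lemma goodP_iff {n : ℕ} (π : Perm (Fin n)) (a b : Fin n) :
    (π⁻¹ b < π⁻¹ a ∧ ∀ k, π⁻¹ b < k → k < π⁻¹ a → ¬(a < π k ∧ π k < b))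
      ↔ IsGood a b π⁻¹ := by
  unfold IsGood
  constructor
  · rintro ⟨h1, h2⟩
    refine ⟨h1, ?_⟩
    rintro c hac hcb ⟨hl, hh⟩
    exact h2 (π⁻¹ c) hl hh ⟨by rwa [π.apply_inv_self], by rwa [π.apply_inv_self]⟩
  · rintro ⟨h1, h2⟩
    refine ⟨h1, ?_⟩
    rintro k hk1 hk2 ⟨ha, hb⟩
    refine h2 (π k) ha hb ⟨?_, ?_⟩
    · rwa [π.inv_apply_self]
    · rwa [π.inv_apply_self]


theorem expected_downDeg {n : ℕ} (hn : 0 < n) :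
    (∑ π : Equiv.Perm (Fin n), (downDeg π : ℚ)) / (Nat.factorial n : ℚ) =
      (n + 1) * (∑ i ∈ Finset.Icc 1 n, (1 : ℚ) / i) - 2 * n := by
  have hfac : (Nat.factorial n : ℚ) ≠ 0 := Nat.cast_ne_zero.mpr n.factorial_ne_zero
  have hdd : ∀ π : Perm (Fin n), (downDeg π : ℚ)
      = ∑ p : Fin n × Fin n,
          (if p.1 < p.2 ∧ invNum (Equiv.swap p.1 p.2 * π) + 1 = invNum π then (1:ℚ) else 0) := by
    intro π
    rw [downDeg, Finset.card_filter]
    push_cast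
    rfl
  have hper : ∀ p : Fin n × Fin n,
      (∑ π : Perm (Fin n),
        (if p.1 < p.2 ∧ invNum (Equiv.swap p.1 p.2 * π) + 1 = invNum π then (1:ℚ) else 0))
      = if p.1 < p.2 then (n.factorial : ℚ) / ((p.2.val - p.1.val + 1 : ℕ) : ℚ) else 0 := by
    intro p
    by_cases h : p.1 < p.2
    · rw [if_pos h]
      have hcond : ∀ π : Perm (Fin n),
          (p.1 < p.2 ∧ invNum (Equiv.swap p.1 p.2 * π) + 1 = invNum π)
            ↔ IsGood p.1 p.2 π⁻¹ := by
        intro π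
        constructor
        · rintro ⟨-, hc⟩
          exact (goodP_iff π p.1 p.2).mp ((cover_iff π p.1 p.2 h).mp hc)
        · intro hg
          exact ⟨h, (cover_iff π p.1 p.2 h).mpr ((goodP_iff π p.1 p.2).mpr hg)⟩
      calc ∑ π : Perm (Fin n),
            (if p.1 < p.2 ∧ invNum (Equiv.swap p.1 p.2 * π) + 1 = invNum π then (1:ℚ) else 0)
          = ∑ π : Perm (Fin n), (if IsGood p.1 p.2 π⁻¹ then (1:ℚ) else 0) :=
            Finset.sum_congr rfl fun π _ => if_congr (hcond π) rfl rfl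
        _ = ∑ σ : Perm (Fin n), (if IsGood p.1 p.2 σ then (1:ℚ) else 0) := by
            exact Fintype.sum_equiv (Equiv.inv (Perm (Fin n))) _ _ (fun π => rfl)
        _ = ((univ.filter (fun σ : Perm (Fin n) => IsGood p.1 p.2 σ)).card : ℚ) := by
            rw [Finset.card_filter]
            push_cast
            rfl
        _ = (n.factorial : ℚ) / ((p.2.val - p.1.val + 1 : ℕ) : ℚ) := by
            have hgc := good_count p.1 p.2 h
            have hm0 : ((p.2.val - p.1.val + 1 : ℕ) : ℚ) ≠ 0 :=
              Nat.cast_ne_zero.mpr (Nat.succ_ne_zero _)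
            rw [eq_div_iff hm0]
            rw [mul_comm]
            exact_mod_cast congrArg (Nat.cast (R := ℚ)) hgc
    · rw [if_neg h]
      exact Finset.sum_eq_zero fun π _ => by rw [if_neg (fun hc => h hc.1)]
  have h1 : (∑ π : Perm (Fin n), (downDeg π : ℚ))
      = ∑ p : Fin n × Fin n,
          (if p.1 < p.2 then (n.factorial : ℚ) / ((p.2.val - p.1.val + 1 : ℕ) : ℚ) else 0) := by
    rw [Finset.sum_congr rfl fun π _ => hdd π, Finset.sum_comm]
    exact Finset.sum_congr rfl fun p _ => hper p
  rw [h1, Finset.sum_div]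
  have h2 : ∀ p : Fin n × Fin n,
      (if p.1 < p.2 then (n.factorial : ℚ) / ((p.2.val - p.1.val + 1 : ℕ) : ℚ) else 0)
          / (n.factorial : ℚ)
        = if p.1 < p.2 then (1:ℚ) / ((p.2.val - p.1.val + 1 : ℕ) : ℚ) else 0 := by
    intro p
    split_ifs with h
    · rw [div_right_comm, div_self hfac]
    · exact zero_div _
  rw [Finset.sum_congr rfl fun p _ => h2 p]
  rw [Fintype.sum_prod_type]
  have h3 : ∀ x y : Fin n,
      (if x < y then (1:ℚ) / ((y.val - x.val + 1 : ℕ) : ℚ) else 0)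
        = (fun (u v : ℕ) => if u < v then (1:ℚ) / ((v - u + 1 : ℕ) : ℚ) else 0) x.val y.val :=
    fun x y => if_congr Fin.lt_def rfl rfl
  calc ∑ x : Fin n, ∑ y : Fin n, (if x < y then (1:ℚ) / ((y.val - x.val + 1 : ℕ) : ℚ) else 0)
      = ∑ x : Fin n, ∑ y ∈ Finset.range n,
          (if x.val < y then (1:ℚ) / ((y - x.val + 1 : ℕ) : ℚ) else 0) := by
        refine Finset.sum_congr rfl fun x _ => ?_
        rw [Finset.sum_congr rfl fun y _ => h3 x y]
        exact Fin.sum_univ_eq_sum_range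
          (fun v => if x.val < v then (1:ℚ) / ((v - x.val + 1 : ℕ) : ℚ) else 0) n
    _ = ∑ x ∈ Finset.range n, ∑ y ∈ Finset.range n,
          (if x < y then (1:ℚ) / ((y - x + 1 : ℕ) : ℚ) else 0) :=
        Fin.sum_univ_eq_sum_range
          (fun u => ∑ y ∈ Finset.range n,
            (if u < y then (1:ℚ) / ((y - u + 1 : ℕ) : ℚ) else 0)) n
    _ = (n + 1) * (∑ i ∈ Finset.Icc 1 n, (1 : ℚ) / i) - 2 * n := harm n
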